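/- If θδ ≠ 1, then at any equilibrium (ξ₁, ξ₂) with ξ₁ > 0, ξ₂ > 0 of the system ξ₁' = ξ₁(μ₁ + θξ₁ + γξ₂), ξ₂' = ξ₂(μ₂ + ξ₁/γ + δξ₂), the eigenvalues of the Jacobian are never a pair of nonzero purely imaginary complex conjugates. (No Hopf bifurcation occurs at the interior equilibrium.) -/

import Mathlib

/-- No Hopf bifurcation: when θδ ≠ 1, the Jacobian at an interior equilibrium
never has a pair of nonzero purely imaginary conjugate eigenvalues. -/
theorem stmt_6 (μ₁ μ₂ θ δ γ : ℝ) (hγ : γ ≠ 0) (h : θ * δ ≠ 1)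
    (ξ₁ ξ₂ : ℝ) (hξ₁ : 0 < ξ₁) (hξ₂ : 0 < ξ₂)
    (h1 : μ₁ + θ * ξ₁ + γ * ξ₂ = 0) (h2 : μ₂ + ξ₁ / γ + δ * ξ₂ = 0)
    (J : Matrix (Fin 2) (Fin 2) ℝ)
    (hJ : J = !![θ * ξ₁, γ * ξ₁; ξ₂ / γ, δ * ξ₂]) :
    ¬ ∃ b : ℝ, b ≠ 0 ∧
      (Complex.I * b) ^ 2 - (J.trace : ℂ) * (Complex.I * b) + (J.det : ℂ) = 0 ∧
      (-(Complex.I * b)) ^ 2 - (J.trace : ℂ) * (-(Complex.I * b)) + (J.det : ℂ) = 0 := by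
  rintro ⟨b, hb, e1, e2⟩
  subst hJ
  rw [Matrix.trace_fin_two_of, Matrix.det_fin_two_of] at e1 e2
  set T : ℝ := θ * ξ₁ + δ * ξ₂ with hTdef
  set D : ℝ := θ * ξ₁ * (δ * ξ₂) - γ * ξ₁ * (ξ₂ / γ) with hDdef
  have hbC : (b : ℂ) ≠ 0 := by exact_mod_cast hb
  have hsub : (2 : ℂ) * T * (Complex.I * b) = 0 := by
    push_cast at e1 e2 ⊢
    linear_combination e2 - e1
  have hT0 : (T : ℂ) = 0 := by
    rcases mul_eq_zero.mp hsub with h' | h'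
    · rcases mul_eq_zero.mp h' with h'' | h''
      · norm_num at h''
      · exact h''
    · rcases mul_eq_zero.mp h' with h'' | h''
      · exact absurd h'' Complex.I_ne_zero
      · exact absurd h'' hbC
  have hTr : T = 0 := by exact_mod_cast hT0
  have hDC : (D : ℂ) = ((b ^ 2 : ℝ) : ℂ) := by
    push_cast
    push_cast at e1
    linear_combination e1 + hT0 * (Complex.I * b) - (b:ℂ)^2 * Complex.I_sq
  have hDr : D = b ^ 2 := by exact_mod_cast hDC
  have hD' : ξ₁ * ξ₂ * (θ * δ - 1) = b ^ 2 := by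
    rw [← hDr, hDdef]; field_simp
  have hb2 : 0 < b ^ 2 := by positivity
  have hθδ : 1 < θ * δ := by nlinarith [mul_pos hξ₁ hξ₂]
  have hTr' : θ * ξ₁ + δ * ξ₂ = 0 := by rw [← hTdef]; exact hTr
  have key : θ * ξ₁ * (δ * ξ₂) + (δ * ξ₂) ^ 2 = 0 := by
    linear_combination (δ * ξ₂) * hTr'
  nlinarith [sq_nonneg (δ * ξ₂), mul_pos hξ₁ hξ₂, key, hθδ]
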